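/- For all integers l and ν, the interference-free and ISI components of the range-Doppler map are uncorrelated: E[χ_free(l,ν)·conj(χ_ISI(l,ν))] = 0. -/

import Mathlib

open MeasureTheory ProbabilityTheory Complex Finset Matrix

private lemma indepFun_integral_mul_complex {Ω : Type*} {mΩ : MeasurableSpace Ω} {μ : Measure Ω}
    {X Y : Ω → ℂ} (h : IndepFun X Y μ) (hX : Integrable X μ) (hY : Integrable Y μ) :
    ∫ ω, X ω * Y ω ∂μ = (∫ ω, X ω ∂μ) * ∫ ω, Y ω ∂μ := by
  have hrr := h.comp Complex.measurable_re Complex.measurable_re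
  have hri := h.comp Complex.measurable_re Complex.measurable_im
  have hir := h.comp Complex.measurable_im Complex.measurable_re
  have hii := h.comp Complex.measurable_im Complex.measurable_im
  have hXr : Integrable (fun ω => (X ω).re) μ := by simpa using hX.re
  have hXi : Integrable (fun ω => (X ω).im) μ := by simpa using hX.im
  have hYr : Integrable (fun ω => (Y ω).re) μ := by simpa using hY.re
  have hYi : Integrable (fun ω => (Y ω).im) μ := by simpa using hY.im
  have Irr : ∫ ω, (X ω).re * (Y ω).re ∂μ = (∫ ω, (X ω).re ∂μ) * ∫ ω, (Y ω).re ∂μ := by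
    simpa [Function.comp] using hrr.integral_mul_eq_mul_integral hXr.1 hYr.1
  have Iri : ∫ ω, (X ω).re * (Y ω).im ∂μ = (∫ ω, (X ω).re ∂μ) * ∫ ω, (Y ω).im ∂μ := by
    simpa [Function.comp] using hri.integral_mul_eq_mul_integral hXr.1 hYi.1
  have Iir : ∫ ω, (X ω).im * (Y ω).re ∂μ = (∫ ω, (X ω).im ∂μ) * ∫ ω, (Y ω).re ∂μ := by
    simpa [Function.comp] using hir.integral_mul_eq_mul_integral hXi.1 hYr.1
  have Iii : ∫ ω, (X ω).im * (Y ω).im ∂μ = (∫ ω, (X ω).im ∂μ) * ∫ ω, (Y ω).im ∂μ := by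
    simpa [Function.comp] using hii.integral_mul_eq_mul_integral hXi.1 hYi.1
  have Jrr : Integrable (fun ω => (X ω).re * (Y ω).re) μ := by
    exact hrr.integrable_mul hXr hYr
  have Jri : Integrable (fun ω => (X ω).re * (Y ω).im) μ := by
    exact hri.integrable_mul hXr hYi
  have Jir : Integrable (fun ω => (X ω).im * (Y ω).re) μ := by
    exact hir.integrable_mul hXi hYr
  have Jii : Integrable (fun ω => (X ω).im * (Y ω).im) μ := by
    exact hii.integrable_mul hXi hYi
  have hXY : Integrable (fun ω => X ω * Y ω) μ := by
    exact h.integrable_mul hX hY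
  have hre : (∫ ω, X ω * Y ω ∂μ).re = ((∫ ω, X ω ∂μ) * ∫ ω, Y ω ∂μ).re := by
    rw [Complex.mul_re]
    have h1 : (∫ ω, X ω * Y ω ∂μ).re = ∫ ω, (X ω * Y ω).re ∂μ := by
      simpa using (integral_re hXY).symm
    rw [h1]
    have h2 : ∫ ω, (X ω * Y ω).re ∂μ
        = ∫ ω, ((X ω).re * (Y ω).re - (X ω).im * (Y ω).im) ∂μ := by
      simp [Complex.mul_re]
    rw [h2, integral_sub Jrr Jii]
    have e1 : (∫ ω, X ω ∂μ).re = ∫ ω, (X ω).re ∂μ := by simpa using (integral_re hX).symm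
    have e2 : (∫ ω, Y ω ∂μ).re = ∫ ω, (Y ω).re ∂μ := by simpa using (integral_re hY).symm
    have e3 : (∫ ω, X ω ∂μ).im = ∫ ω, (X ω).im ∂μ := by simpa using (integral_im hX).symm
    have e4 : (∫ ω, Y ω ∂μ).im = ∫ ω, (Y ω).im ∂μ := by simpa using (integral_im hY).symm
    rw [e1, e2, e3, e4, Irr, Iii]
  have him : (∫ ω, X ω * Y ω ∂μ).im = ((∫ ω, X ω ∂μ) * ∫ ω, Y ω ∂μ).im := by
    rw [Complex.mul_im]
    have h1 : (∫ ω, X ω * Y ω ∂μ).im = ∫ ω, (X ω * Y ω).im ∂μ := by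
      simpa using (integral_im hXY).symm
    rw [h1]
    have h2 : ∫ ω, (X ω * Y ω).im ∂μ
        = ∫ ω, ((X ω).re * (Y ω).im + (X ω).im * (Y ω).re) ∂μ := by
      simp [Complex.mul_im]
    rw [h2, integral_add Jri Jir]
    have e1 : (∫ ω, X ω ∂μ).re = ∫ ω, (X ω).re ∂μ := by simpa using (integral_re hX).symm
    have e2 : (∫ ω, Y ω ∂μ).re = ∫ ω, (Y ω).re ∂μ := by simpa using (integral_re hY).symm
    have e3 : (∫ ω, X ω ∂μ).im = ∫ ω, (X ω).im ∂μ := by simpa using (integral_im hX).symm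
    have e4 : (∫ ω, Y ω ∂μ).im = ∫ ω, (Y ω).im ∂μ := by simpa using (integral_im hY).symm
    rw [e1, e2, e3, e4, Iri, Iir]
  exact Complex.ext hre him

private lemma iIndepFun_congr_ae {Ω ι : Type*} {mΩ : MeasurableSpace Ω} {μ : Measure Ω}
    {f g : ι → Ω → ℂ} (h : iIndepFun f μ)
    (hfg : ∀ i, f i =ᵐ[μ] g i) :
    iIndepFun g μ := by
  rw [iIndepFun_iff_measure_inter_preimage_eq_mul] at h ⊢
  intro S sets hsets
  have hpre : ∀ i, (f i ⁻¹' sets i : Set Ω) =ᵐ[μ] (g i ⁻¹' sets i : Set Ω) := by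
    intro i
    rw [Filter.eventuallyEq_set]
    filter_upwards [hfg i] with ω hω
    simp [Set.mem_preimage, hω]
  have h1 : μ (⋂ i ∈ S, g i ⁻¹' sets i) = μ (⋂ i ∈ S, f i ⁻¹' sets i) := by
    apply measure_congr
    rw [Filter.eventuallyEq_set]
    have hall : ∀ᵐ ω ∂μ, ∀ i ∈ (S : Set ι), (ω ∈ f i ⁻¹' sets i ↔ ω ∈ g i ⁻¹' sets i) := by
      rw [ae_ball_iff S.countable_toSet]
      intro i _
      filter_upwards [hfg i] with ω hω
      simp [Set.mem_preimage, hω]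
    filter_upwards [hall] with ω hω
    simp only [Set.mem_iInter]
    exact ⟨fun H i hi => (hω i (Finset.mem_coe.2 hi)).2 (H i hi),
      fun H i hi => (hω i (Finset.mem_coe.2 hi)).1 (H i hi)⟩
  rw [h1, h S hsets]
  exact Finset.prod_congr rfl fun i _ => measure_congr (hpre i)

private lemma iIndep_integral_prod {Ω ι : Type*} {mΩ : MeasurableSpace Ω} {μ : Measure Ω}
    [IsProbabilityMeasure μ]
    {g : ι → Ω → ℂ} (h : iIndepFun g μ)
    (hmeas : ∀ i, Measurable (g i)) (S : Finset ι) (hint : ∀ i ∈ S, Integrable (g i) μ) :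
    Integrable (fun ω => ∏ i ∈ S, g i ω) μ ∧
      ∫ ω, ∏ i ∈ S, g i ω ∂μ = ∏ i ∈ S, ∫ ω, g i ω ∂μ := by
  classical
  induction S using Finset.induction_on with
  | empty => simp
  | @insert a S ha ih =>
    obtain ⟨ihInt, ihEq⟩ := ih fun i hi => hint i (Finset.mem_insert_of_mem hi)
    have h1 : IndepFun (∏ j ∈ S, g j) (g a) μ :=
      iIndepFun.indepFun_finset_prod_of_notMem h hmeas ha
    have h1' : IndepFun (g a) (fun ω => ∏ j ∈ S, g j ω) μ := by
      have : (∏ j ∈ S, g j) = fun ω => ∏ j ∈ S, g j ω := by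
        funext ω; simp [Finset.prod_apply]
      exact (this ▸ h1).symm
    have hga : Integrable (g a) μ := hint a (Finset.mem_insert_self a S)
    have hmul : Integrable (fun ω => g a ω * ∏ j ∈ S, g j ω) μ := by
      exact h1'.integrable_mul hga ihInt
    constructor
    · simpa [Finset.prod_insert ha] using hmul
    · rw [Finset.prod_insert ha]
      have : ∫ ω, ∏ i ∈ insert a S, g i ω ∂μ = ∫ ω, g a ω * ∏ i ∈ S, g i ω ∂μ := by
        congr 1; funext ω; rw [Finset.prod_insert ha]
      rw [this, indepFun_integral_mul_complex h1' hga ihInt, ihEq]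

private lemma prod_prod_ite_eq {ι : Type*} [DecidableEq ι] {k : ℕ}
    (a : Fin k → ι) (w : Fin k → ℂ → ℂ) (f : ι → ℂ) (S : Finset ι) (hS : ∀ j, a j ∈ S) :
    ∏ i ∈ S, ∏ j : Fin k, (if i = a j then w j (f i) else 1) = ∏ j : Fin k, w j (f (a j)) := by
  rw [Finset.prod_comm]
  refine Finset.prod_congr rfl fun j _ => ?_
  rw [Finset.prod_ite_eq' S (a j) (fun i => w j (f i))]
  simp [hS j]

private lemma integrable_one_add_pow {Ω : Type*} {mΩ : MeasurableSpace Ω} {μ : Measure Ω}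
    [IsFiniteMeasure μ] {X : Ω → ℂ} (k : ℕ) (hk : k ≠ 0) (hX : MemLp X k μ) :
    Integrable (fun ω => (1 + ‖X ω‖) ^ k) μ := by
  have h1 : MemLp (fun ω => 1 + ‖X ω‖) k μ := (memLp_const (1:ℝ)).add hX.norm
  have h2 := h1.integrable_norm_rpow (by exact_mod_cast hk) (by simp)
  refine h2.congr (Filter.Eventually.of_forall fun ω => ?_)
  show ‖(1 : ℝ) + ‖X ω‖‖ ^ ((k : ENNReal)).toReal = (1 + ‖X ω‖) ^ k
  rw [Real.norm_eq_abs, _root_.abs_of_nonneg (by positivity), ENNReal.toReal_natCast,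
    Real.rpow_natCast]

private lemma key_zero {Ω : Type*} [MeasureSpace Ω] [IsProbabilityMeasure (volume : Measure Ω)]
    {QT ST : Type*}
    (α : QT → Ω → ℂ) (s : ST → Ω → ℂ)
    (hindep : iIndepFun (Sum.elim α s) volume)
    (hαL2 : ∀ j, MemLp (α j) 2 volume) (hsL4 : ∀ D, MemLp (s D) 4 volume)
    (hsmean : ∀ D, ∫ ω, s D ω = 0)
    (q q' : QT) (A B C : ST) (hBC : B ≠ C) :
    Integrable (fun ω => (α q ω * (s A ω * (starRingEnd ℂ) (s A ω))) *
      ((starRingEnd ℂ) (α q' ω) * ((starRingEnd ℂ) (s B ω) * s C ω))) volume ∧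
    ∫ ω, (α q ω * (s A ω * (starRingEnd ℂ) (s A ω))) *
      ((starRingEnd ℂ) (α q' ω) * ((starRingEnd ℂ) (s B ω) * s C ω)) = 0 := by
  classical
  have hex : ∀ i : QT ⊕ ST, ∃ h : Ω → ℂ, Measurable h ∧ Sum.elim α s i =ᵐ[volume] h := by
    intro i
    match i with
    | Sum.inl j => exact (hαL2 j).1.aemeasurable
    | Sum.inr D => exact (hsL4 D).1.aemeasurable
  choose f' hf'meas hf'ae using hex
  have hindep' : iIndepFun f' volume := iIndepFun_congr_ae hindep hf'ae
  have hα' : ∀ j, MemLp (f' (Sum.inl j)) 2 volume := fun j => (hαL2 j).ae_eq (hf'ae (Sum.inl j))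
  have hs' : ∀ D, MemLp (f' (Sum.inr D)) 4 volume := fun D => (hsL4 D).ae_eq (hf'ae (Sum.inr D))
  have hsmean' : ∀ D, ∫ ω, f' (Sum.inr D) ω = 0 := fun D =>
    (integral_congr_ae (hf'ae (Sum.inr D))).symm.trans (hsmean D)
  set a : Fin 5 → QT ⊕ ST := ![Sum.inl q, Sum.inl q', Sum.inr A, Sum.inr B, Sum.inr C] with ha
  set w : Fin 5 → ℂ → ℂ :=
    ![fun z => z, fun z => (starRingEnd ℂ) z, fun z => z * (starRingEnd ℂ) z,
      fun z => (starRingEnd ℂ) z, fun z => z] with hw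
  set F : (QT ⊕ ST) → ℂ → ℂ := fun i z => ∏ j : Fin 5, (if i = a j then w j z else 1) with hF
  set g : (QT ⊕ ST) → Ω → ℂ := fun i ω => F i (f' i ω) with hg
  have hconjmeas : Measurable fun z : ℂ => (starRingEnd ℂ) z := Complex.continuous_conj.measurable
  have hwmeas : ∀ j : Fin 5, Measurable (w j) := by
    intro j
    fin_cases j <;> simp only [hw] <;> simp <;>
      first
        | exact measurable_id
        | exact hconjmeas
        | exact measurable_id.mul hconjmeas
  have hFmeas : ∀ i, Measurable (F i) := by
    intro i
    rw [hF]
    apply Finset.measurable_prod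
    intro j _
    by_cases hij : i = a j
    · simpa [hij] using hwmeas j
    · simp [hij]
  have hgmeas : ∀ i, Measurable (g i) := fun i => (hFmeas i).comp (hf'meas i)
  have hgindep : iIndepFun g volume := hindep'.comp F hFmeas
  -- pointwise norm bounds
  have hFle_l : ∀ (j : QT) (z : ℂ), ‖F (Sum.inl j) z‖ ≤ (1 + ‖z‖) ^ 2 := by
    intro j z
    have hz : (0:ℝ) ≤ ‖z‖ := norm_nonneg z
    simp only [hF]
    rw [Fin.prod_univ_five]
    simp only [ha, hw]
    simp
    split_ifs <;> (try simp [norm_mul]) <;>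
      nlinarith [norm_nonneg z, sq_nonneg (‖z‖),
        sq_nonneg (1 + ‖z‖), le_abs_self (1 + ‖z‖)]
  have hFle_r : ∀ (D : ST) (z : ℂ), ‖F (Sum.inr D) z‖ ≤ (1 + ‖z‖) ^ 4 := by
    intro D z
    have hz : (0:ℝ) ≤ ‖z‖ := norm_nonneg z
    simp only [hF]
    rw [Fin.prod_univ_five]
    simp only [ha, hw]
    simp
    split_ifs <;> (try simp [norm_mul]) <;>
      nlinarith [norm_nonneg z, sq_nonneg (‖z‖),
        sq_nonneg (1 + ‖z‖), le_abs_self (1 + ‖z‖), sq_nonneg (‖z‖ * ‖z‖ - 1)]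
  have hgint : ∀ i, Integrable (g i) volume := by
    intro i
    match i with
    | Sum.inl j =>
      have hb : Integrable (fun ω => (1 + ‖f' (Sum.inl j) ω‖) ^ 2) volume := by
        refine integrable_one_add_pow 2 (by norm_num) ?_
        exact_mod_cast hα' j
      refine hb.mono' (hgmeas (Sum.inl j)).aestronglyMeasurable
        (Filter.Eventually.of_forall fun ω => ?_)
      exact hFle_l j (f' (Sum.inl j) ω)
    | Sum.inr D =>
      have hb : Integrable (fun ω => (1 + ‖f' (Sum.inr D) ω‖) ^ 4) volume := by
        refine integrable_one_add_pow 4 (by norm_num) ?_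
        exact_mod_cast hs' D
      refine hb.mono' (hgmeas (Sum.inr D)).aestronglyMeasurable
        (Filter.Eventually.of_forall fun ω => ?_)
      exact hFle_r D (f' (Sum.inr D) ω)
  set S : Finset (QT ⊕ ST) := {Sum.inl q, Sum.inl q', Sum.inr A, Sum.inr B, Sum.inr C} with hS
  have hmemS : ∀ j : Fin 5, a j ∈ S := by
    intro j
    fin_cases j <;> simp [hS, ha]
  obtain ⟨hIprod, hEq⟩ := iIndep_integral_prod hgindep hgmeas S (fun i _ => hgint i)
  have hid : ∀ ω, (∏ i ∈ S, g i ω) = ∏ j : Fin 5, w j (f' (a j) ω) := by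
    intro ω
    have := prod_prod_ite_eq a w (fun i => f' i ω) S hmemS
    simpa [hg, hF] using this
  have hzero : (∏ i ∈ S, ∫ ω, g i ω) = 0 := by
    by_cases hBA : B = A
    · -- distinguished factor: s C, mean zero
      have hCA : C ≠ A := fun h => hBC (hBA.trans h.symm)
      have hFC : ∀ z, F (Sum.inr C) z = z := by
        intro z
        simp only [hF]
        rw [Fin.prod_univ_five]
        have hCB : C ≠ B := Ne.symm hBC
        simp [ha, hw, hCA, hCB]
      apply Finset.prod_eq_zero (show (Sum.inr C : QT ⊕ ST) ∈ S by simp [hS])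
      have hgC : g (Sum.inr C) = fun ω => f' (Sum.inr C) ω := by
        funext ω; rw [hg]; exact hFC _
      rw [hgC]
      exact hsmean' C
    · -- distinguished factor: conj (s B), mean zero
      have hFB : ∀ z, F (Sum.inr B) z = (starRingEnd ℂ) z := by
        intro z
        simp only [hF]
        rw [Fin.prod_univ_five]
        simp [ha, hw, hBA, hBC]
      apply Finset.prod_eq_zero (show (Sum.inr B : QT ⊕ ST) ∈ S by simp [hS])
      have hgB : g (Sum.inr B) = fun ω => (starRingEnd ℂ) (f' (Sum.inr B) ω) := by
        funext ω; rw [hg]; exact hFB _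
      rw [hgB]
      rw [integral_conj, hsmean' B, map_zero]
  have hae2 : (fun ω => (α q ω * (s A ω * (starRingEnd ℂ) (s A ω))) *
      ((starRingEnd ℂ) (α q' ω) * ((starRingEnd ℂ) (s B ω) * s C ω)))
      =ᵐ[volume] fun ω => ∏ i ∈ S, g i ω := by
    filter_upwards [hf'ae (Sum.inl q), hf'ae (Sum.inl q'), hf'ae (Sum.inr A),
      hf'ae (Sum.inr B), hf'ae (Sum.inr C)] with ω h1 h2 h3 h4 h5
    simp only [Sum.elim_inl, Sum.elim_inr] at h1 h2 h3 h4 h5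
    rw [hid ω, Fin.prod_univ_five]
    simp [ha, hw]
    simp only [← h1, ← h2, ← h3, ← h4, ← h5]
    ring
  constructor
  · exact hIprod.congr hae2.symm
  · rw [integral_congr_ae hae2, hEq, hzero]

/-- interference-free and ISI RDM components are uncorrelated. -/
theorem stmt11 {Ω : Type*} [MeasureSpace Ω] [IsProbabilityMeasure (volume : Measure Ω)]
    (N M : ℕ) (hN : 0 < N) (hM : 0 < M)
    (Δf Ts Tcp : ℝ) (hΔf : 0 < Δf) (hTs : 0 < Ts) (hTcp : 0 < Tcp) (Ncp : ℕ)
    (Q : ℕ) (hQ : 1 ≤ Q)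
    (τ fd : Fin Q → ℝ) (P : Fin Q → ℝ) (l : Fin Q → ℤ)
    (Qt : ℕ) (hQt : Qt ≤ Q)
    (hl : ∀ q : Fin Q, Qt ≤ (q : ℕ) → (Ncp : ℤ) < l q ∧ l q ≤ (N : ℤ) + (Ncp : ℤ))
    (ρ : Fin Q → ℝ) (hρ : ∀ q : Fin Q, ρ q = ((l q : ℝ) - (Ncp : ℝ)) / (N : ℝ))
    (Φ : Fin Q → Matrix (Fin N) (Fin N) ℂ)
    (hΦ : ∀ q : Fin Q, Qt ≤ (q : ℕ) → ∀ n n' : Fin N,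
      Φ q n n' = (1 / (N : ℂ)) * ∑ i ∈ Finset.range (l q - (Ncp : ℤ)).toNat,
        Complex.exp (2 * (Real.pi : ℂ) * Complex.I *
          (((n' : ℕ) : ℂ) - ((n : ℕ) : ℂ)) * (i : ℂ) / (N : ℂ)))
    (s : Fin N × Fin (M + 1) → Ω → ℂ) (α : Fin Q → Ω → ℂ) (μ₄ : ℝ)
    (hindep : iIndepFun (Sum.elim α s) volume)
    (hident : ∀ A B : Fin N × Fin (M + 1), IdentDistrib (s A) (s B) volume volume)
    (hsL4 : ∀ A : Fin N × Fin (M + 1), MemLp (s A) 4 volume)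
    (hsmean : ∀ A : Fin N × Fin (M + 1), ∫ ω, s A ω = 0)
    (hssq : ∀ A : Fin N × Fin (M + 1), ∫ ω, (s A ω) ^ 2 = 0)
    (hsabs2 : ∀ A : Fin N × Fin (M + 1), ∫ ω, ‖s A ω‖ ^ 2 = 1)
    (hsabs4 : ∀ A : Fin N × Fin (M + 1), ∫ ω, ‖s A ω‖ ^ 4 = μ₄)
    (hαL2 : ∀ q : Fin Q, MemLp (α q) 2 volume)
    (hαmean : ∀ q : Fin Q, ∫ ω, α q ω = 0)
    (hαabs2 : ∀ q : Fin Q, ∫ ω, ‖α q ω‖ ^ 2 = P q)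
    (yfree : Ω → Fin N → Fin M → ℂ)
    (hyfree : ∀ (ω : Ω) (n : Fin N) (m : Fin M), yfree ω n m =
      ∑ q : Fin Q, α q ω * s (n, m.succ) ω *
        Complex.exp (-(2 * (Real.pi : ℂ) * Complex.I * ((n : ℕ) : ℂ) * (Δf : ℂ) * ((τ q : ℝ) : ℂ))) *
        Complex.exp (2 * (Real.pi : ℂ) * Complex.I * ((m : ℕ) : ℂ) * ((fd q : ℝ) : ℂ) * (Ts : ℂ)))
    (yISI : Ω → Fin N → Fin M → ℂ)
    (hyISI : ∀ (ω : Ω) (n : Fin N) (m : Fin M), yISI ω n m =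
      ∑ q ∈ Finset.univ.filter (fun q : Fin Q => Qt ≤ (q : ℕ)), α q ω *
        Complex.exp (2 * (Real.pi : ℂ) * Complex.I * (((m : ℕ) : ℂ) - 1) * ((fd q : ℝ) : ℂ) * (Ts : ℂ)) *
        ∑ n' : Fin N, s (n', m.castSucc) ω *
          Complex.exp (2 * (Real.pi : ℂ) * Complex.I * ((n' : ℕ) : ℂ) * (Δf : ℂ) * ((Tcp : ℝ) - τ q : ℝ)) *
          Φ q n n')
    (χfree : ℤ → ℤ → Ω → ℂ)
    (hχfree : ∀ (lv νv : ℤ) (ω : Ω), χfree lv νv ω =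
      ((1 / Real.sqrt ((M : ℝ) * (N : ℝ)) : ℝ) : ℂ) *
      ∑ n : Fin N, ∑ m : Fin M, yfree ω n m * (starRingEnd ℂ) (s (n, m.succ) ω) *
        Complex.exp (2 * (Real.pi : ℂ) * Complex.I * ((n : ℕ) : ℂ) * (lv : ℂ) / (N : ℂ)) *
        Complex.exp (-(2 * (Real.pi : ℂ) * Complex.I * ((m : ℕ) : ℂ) * (νv : ℂ) / (M : ℂ))))
    (χISI : ℤ → ℤ → Ω → ℂ)
    (hχISI : ∀ (lv νv : ℤ) (ω : Ω), χISI lv νv ω =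
      ((1 / Real.sqrt ((M : ℝ) * (N : ℝ)) : ℝ) : ℂ) *
      ∑ n : Fin N, ∑ m : Fin M, yISI ω n m * (starRingEnd ℂ) (s (n, m.succ) ω) *
        Complex.exp (2 * (Real.pi : ℂ) * Complex.I * ((n : ℕ) : ℂ) * (lv : ℂ) / (N : ℂ)) *
        Complex.exp (-(2 * (Real.pi : ℂ) * Complex.I * ((m : ℕ) : ℂ) * (νv : ℂ) / (M : ℂ))))
    : ∀ lv νv : ℤ,
      ∫ ω, χfree lv νv ω * (starRingEnd ℂ) (χISI lv νv ω) = 0 := by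
  intro lv νv
  classical
  set Kf : Fin N × Fin M × Fin Q → ℂ := fun p =>
    ((1 / Real.sqrt ((M : ℝ) * (N : ℝ)) : ℝ) : ℂ) *
      Complex.exp (-(2 * (Real.pi : ℂ) * Complex.I * ((p.1 : ℕ) : ℂ) * (Δf : ℂ) * ((τ p.2.2 : ℝ) : ℂ))) *
      Complex.exp (2 * (Real.pi : ℂ) * Complex.I * ((p.2.1 : ℕ) : ℂ) * ((fd p.2.2 : ℝ) : ℂ) * (Ts : ℂ)) *
      Complex.exp (2 * (Real.pi : ℂ) * Complex.I * ((p.1 : ℕ) : ℂ) * (lv : ℂ) / (N : ℂ)) *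
      Complex.exp (-(2 * (Real.pi : ℂ) * Complex.I * ((p.2.1 : ℕ) : ℂ) * (νv : ℂ) / (M : ℂ))) with hKf
  set Rf : Fin N × Fin M × Fin Q → Ω → ℂ := fun p ω =>
    α p.2.2 ω * (s (p.1, p.2.1.succ) ω * (starRingEnd ℂ) (s (p.1, p.2.1.succ) ω)) with hRf
  set Ki : Fin N × Fin M × Fin Q × Fin N → ℂ := fun p =>
    (if Qt ≤ ((p.2.2.1 : Fin Q) : ℕ) then 1 else 0) *
      ((1 / Real.sqrt ((M : ℝ) * (N : ℝ)) : ℝ) : ℂ) *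
      (starRingEnd ℂ) (Complex.exp (2 * (Real.pi : ℂ) * Complex.I * (((p.2.1 : ℕ) : ℂ) - 1) * ((fd p.2.2.1 : ℝ) : ℂ) * (Ts : ℂ))) *
      (starRingEnd ℂ) (Complex.exp (2 * (Real.pi : ℂ) * Complex.I * ((p.2.2.2 : ℕ) : ℂ) * (Δf : ℂ) * (((Tcp : ℝ) - τ p.2.2.1 : ℝ) : ℂ))) *
      (starRingEnd ℂ) (Φ p.2.2.1 p.1 p.2.2.2) *
      (starRingEnd ℂ) (Complex.exp (2 * (Real.pi : ℂ) * Complex.I * ((p.1 : ℕ) : ℂ) * (lv : ℂ) / (N : ℂ))) *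
      (starRingEnd ℂ) (Complex.exp (-(2 * (Real.pi : ℂ) * Complex.I * ((p.2.1 : ℕ) : ℂ) * (νv : ℂ) / (M : ℂ)))) with hKi
  set Ri : Fin N × Fin M × Fin Q × Fin N → Ω → ℂ := fun p ω =>
    (starRingEnd ℂ) (α p.2.2.1 ω) *
      ((starRingEnd ℂ) (s (p.2.2.2, p.2.1.castSucc) ω) * s (p.1, p.2.1.succ) ω) with hRi
  have hf2 : ∀ ω, χfree lv νv ω = ∑ p : Fin N × Fin M × Fin Q, Kf p * Rf p ω := by
    intro ω
    rw [hχfree]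
    simp only [hyfree, Finset.sum_mul, Finset.mul_sum, Fintype.sum_prod_type]
    refine Finset.sum_congr rfl fun n _ => Finset.sum_congr rfl fun m _ =>
      Finset.sum_congr rfl fun q _ => ?_
    simp only [hKf, hRf]
    ring
  have hi2 : ∀ ω, (starRingEnd ℂ) (χISI lv νv ω)
      = ∑ p : Fin N × Fin M × Fin Q × Fin N, Ki p * Ri p ω := by
    intro ω
    rw [hχISI]
    simp only [hyISI, Finset.sum_filter, _root_.map_mul, map_sum, Complex.conj_ofReal,
      Complex.conj_conj, apply_ite (starRingEnd ℂ), _root_.map_zero, _root_.map_one,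
      ite_mul, zero_mul, Finset.sum_mul, Finset.mul_sum, Fintype.sum_prod_type]
    refine Finset.sum_congr rfl fun n _ => Finset.sum_congr rfl fun m _ =>
      Finset.sum_congr rfl fun q' _ => ?_
    by_cases hq : Qt ≤ (q' : ℕ)
    · simp only [hq, if_true]
      rw [Finset.mul_sum]
      refine Finset.sum_congr rfl fun n' _ => ?_
      simp only [hKi, hRi]
      simp only [hq, if_true]
      ring
    · simp only [hq, if_false, mul_zero]
      symm
      refine Finset.sum_eq_zero fun n' _ => ?_
      simp only [hKi]
      simp only [hq, if_false, zero_mul]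
  have hexpand : (fun ω => χfree lv νv ω * (starRingEnd ℂ) (χISI lv νv ω))
      = fun ω => ∑ x : (Fin N × Fin M × Fin Q) × (Fin N × Fin M × Fin Q × Fin N),
          (Kf x.1 * Ki x.2) * (Rf x.1 ω * Ri x.2 ω) := by
    funext ω
    rw [hf2 ω, hi2 ω, Finset.sum_mul_sum]
    conv_rhs => rw [Fintype.sum_prod_type]
    refine Finset.sum_congr rfl fun p1 _ => Finset.sum_congr rfl fun p2 _ => ?_
    dsimp only
    ring
  have hkey : ∀ x : (Fin N × Fin M × Fin Q) × (Fin N × Fin M × Fin Q × Fin N),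
      Integrable (fun ω => Rf x.1 ω * Ri x.2 ω) volume ∧
        ∫ ω, Rf x.1 ω * Ri x.2 ω = 0 := by
    intro x
    have hBC : ((x.2.2.2.2, x.2.2.1.castSucc) : Fin N × Fin (M + 1))
        ≠ (x.2.1, x.2.2.1.succ) := by
      intro h
      exact absurd (congrArg Prod.snd h) (Fin.castSucc_lt_succ (i := x.2.2.1)).ne
    have hk := key_zero α s hindep hαL2 hsL4 hsmean x.1.2.2 x.2.2.2.1
      (x.1.1, x.1.2.1.succ) (x.2.2.2.2, x.2.2.1.castSucc) (x.2.1, x.2.2.1.succ) hBC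
    constructor
    · exact hk.1.congr (Filter.Eventually.of_forall fun ω => by simp only [hRf, hRi])
    · rw [show (fun ω => Rf x.1 ω * Ri x.2 ω)
          = fun ω => (α x.1.2.2 ω * (s (x.1.1, x.1.2.1.succ) ω *
              (starRingEnd ℂ) (s (x.1.1, x.1.2.1.succ) ω))) *
            ((starRingEnd ℂ) (α x.2.2.2.1 ω) *
              ((starRingEnd ℂ) (s (x.2.2.2.2, x.2.2.1.castSucc) ω) * s (x.2.1, x.2.2.1.succ) ω))
          from funext fun ω => by simp only [hRf, hRi]]
      exact hk.2
  rw [hexpand, integral_finset_sum _ (fun x _ => ((hkey x).1.const_mul (Kf x.1 * Ki x.2)))]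
  refine Finset.sum_eq_zero fun x _ => ?_
  rw [integral_const_mul, (hkey x).2, mul_zero]
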